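/- If both a graph G and its complement are connected, then every proper homogeneous set of G is included in a quasi-maximal module of G. -/

import Mathlib

open SimpleGraph

/-- The bull graph: vertices a,b,c,d,e = 0,1,2,3,4; edges ab,bc,cd,be,ce. -/
def bull : SimpleGraph (Fin 5) :=
  SimpleGraph.fromEdgeSet {s(0,1), s(1,2), s(2,3), s(1,4), s(2,4)}

/-- The house graph: complement of the path on five vertices. -/
def house : SimpleGraph (Fin 5) := (SimpleGraph.pathGraph 5)ᶜ

/-- `G` contains no induced subgraph isomorphic to `F`. -/
def FreeOf {V W : Type*} (G : SimpleGraph V) (F : SimpleGraph W) : Prop :=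
  ¬ ∃ f : W ↪ V, ∀ a b : W, G.Adj (f a) (f b) ↔ F.Adj a b

/-- A homogeneous set: every outside vertex is complete or anticomplete to it. -/
def IsHomogSet {V : Type*} (G : SimpleGraph V) (S : Set V) : Prop :=
  ∀ v ∉ S, (∀ s ∈ S, G.Adj v s) ∨ (∀ s ∈ S, ¬ G.Adj v s)

/-- A proper homogeneous set: at least two vertices and not all of `V`. -/
def IsProperHomogSet {V : Type*} (G : SimpleGraph V) (S : Set V) : Prop :=
  IsHomogSet G S ∧ S.Nontrivial ∧ S ≠ Set.univ

/-- A stable (independent) set. -/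
def IsStableSet {V : Type*} (G : SimpleGraph V) (S : Set V) : Prop :=
  S.Pairwise fun u v => ¬ G.Adj u v

/-- A module: a nonempty homogeneous set that overlaps no homogeneous set. -/
def IsModuleSet {V : Type*} (G : SimpleGraph V) (M : Set V) : Prop :=
  M.Nonempty ∧ IsHomogSet G M ∧
    ∀ S : Set V, IsHomogSet G S → S ⊆ M ∨ M ⊆ S ∨ S ∩ M = ∅

/-- A quasi-maximal module: a module, different from `V`, such that the only
module strictly containing it is `V`. -/
def IsQuasiMaxModule {V : Type*} (G : SimpleGraph V) (M : Set V) : Prop :=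
  IsModuleSet G M ∧ M ≠ Set.univ ∧
    ∀ S : Set V, IsModuleSet G S → M ⊂ S → S = Set.univ

/-- A clique cover: a partition of the vertex set into cliques. -/
def IsCliqueCover {V : Type*} (G : SimpleGraph V) (C : Set (Set V)) : Prop :=
  Setoid.IsPartition C ∧ ∀ Q ∈ C, G.IsClique Q

/-- `cc G`: the minimum number of cliques in a clique cover of `G`. -/
noncomputable def cliqueCoverNumber {V : Type*} (G : SimpleGraph V) : ℕ :=
  sInf {n | ∃ C : Set (Set V), IsCliqueCover G C ∧ C.ncard = n}

/-- `S` is complete to `T`: every vertex of `S` is adjacent to every vertex of `T`. -/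
def CompleteTo {V : Type*} (G : SimpleGraph V) (S T : Set V) : Prop :=
  ∀ s ∈ S, ∀ t ∈ T, G.Adj s t

/-- `S` is anticomplete to `T`: no vertex of `S` is adjacent to a vertex of `T`. -/
def AnticompleteTo {V : Type*} (G : SimpleGraph V) (S T : Set V) : Prop :=
  ∀ s ∈ S, ∀ t ∈ T, ¬ G.Adj s t

/-- The 5-tuple setup from the paper: five nonempty pairwise disjoint sets
`A 0, …, A 4` (corresponding to `A_1, …, A_5`, indices modulo 5) with
`A i` complete to `A (i+1)` for `i ∈ {0,1,2,3}`, `A i` anticomplete to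
`A (i+2)` for all `i`, and `A 4` complete or anticomplete to `A 0`. -/
def GoodTuple {V : Type*} (G : SimpleGraph V) (A : Fin 5 → Set V) : Prop :=
  (∀ i, (A i).Nonempty) ∧
  (Pairwise fun i j => Disjoint (A i) (A j)) ∧
  (∀ i : Fin 5, i ≠ 4 → CompleteTo G (A i) (A (i + 1))) ∧
  (∀ i : Fin 5, AnticompleteTo G (A i) (A (i + 2))) ∧
  (CompleteTo G (A 4) (A 0) ∨ AnticompleteTo G (A 4) (A 0))

/-- A good tuple whose union `A` is inclusionwise maximal among all good tuples. -/
def MaximalGoodTuple {V : Type*} (G : SimpleGraph V) (A : Fin 5 → Set V) : Prop :=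
  GoodTuple G A ∧ ∀ A' : Fin 5 → Set V, GoodTuple G A' → ¬ (⋃ i, A i) ⊂ (⋃ i, A' i)

/-- The set `B` of vertices outside `A` that are complete to `A`. -/
def Bset {V : Type*} (G : SimpleGraph V) (A : Fin 5 → Set V) : Set V :=
  {v | v ∉ (⋃ i, A i) ∧ ∀ a ∈ ⋃ i, A i, G.Adj v a}


private lemma homog_union {V : Type*} {G : SimpleGraph V} {S T : Set V}
    (hS : IsHomogSet G S) (hT : IsHomogSet G T) (hST : (S ∩ T).Nonempty) :
    IsHomogSet G (S ∪ T) := by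
  obtain ⟨w, hwS, hwT⟩ := hST
  intro v hv
  have hvS : v ∉ S := fun h => hv (Or.inl h)
  have hvT : v ∉ T := fun h => hv (Or.inr h)
  rcases hS v hvS with h1 | h1 <;> rcases hT v hvT with h2 | h2
  · exact Or.inl (fun s hs => hs.elim (h1 s) (h2 s))
  · exact absurd (h1 w hwS) (h2 w hwT)
  · exact absurd (h2 w hwT) (h1 w hwS)
  · exact Or.inr (fun s hs => hs.elim (h1 s) (h2 s))

private lemma no_split {V : Type*} {G : SimpleGraph V} (hG : G.Connected)
    {A : Set V} (hA : A.Nonempty) (hAc : Aᶜ.Nonempty)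
    (h : ∀ a ∈ A, ∀ b ∈ Aᶜ, ¬ G.Adj a b) : False := by
  obtain ⟨a, ha⟩ := hA
  obtain ⟨b, hb⟩ := hAc
  obtain ⟨p⟩ := hG.preconnected a b
  obtain ⟨d, _, hd1, hd2⟩ := p.exists_boundary_dart A ha hb
  exact h d.fst hd1 d.snd hd2 d.adj

private lemma key_overlap {V : Type*} {G : SimpleGraph V}
    (hG : G.Connected) (hGc : Gᶜ.Connected) {M T : Set V}
    (hM : IsHomogSet G M) (hT : IsHomogSet G T)
    (hMT : (M ∩ T).Nonempty) (hMnT : (M \ T).Nonempty) (hTnM : (T \ M).Nonempty)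
    (hU : M ∪ T = Set.univ) : False := by
  set A : Set V := M \ T with hAdef
  have hAc : Aᶜ = T := by
    ext v
    simp only [Set.mem_compl_iff, hAdef, Set.mem_diff, not_and, not_not]
    constructor
    · intro h
      by_cases hv : v ∈ M
      · exact h hv
      · have : v ∈ M ∪ T := hU ▸ Set.mem_univ v
        exact this.resolve_left hv
    · intro h _; exact h
  -- each a ∈ A is complete or anticomplete to T
  by_cases hadj : ∃ a ∈ A, ∃ t ∈ T, G.Adj a t
  · -- A is complete to T = Aᶜ, so Gᶜ is disconnected
    obtain ⟨a0, ha0, t0, ht0, hat⟩ := hadj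
    have ha0T : ∀ t ∈ T, G.Adj a0 t := by
      rcases hT a0 ha0.2 with h | h
      · exact h
      · exact absurd hat (h t0 ht0)
    obtain ⟨b, hbT, hbM⟩ := hTnM
    have hbMall : ∀ s ∈ M, G.Adj b s := by
      rcases hM b hbM with h | h
      · exact h
      · exact absurd (ha0T b hbT).symm (h a0 ha0.1)
    have hcomp : ∀ a ∈ A, ∀ t ∈ T, G.Adj a t := by
      intro a ha t ht
      rcases hT a ha.2 with h | h
      · exact h t ht
      · exact absurd (hbMall a ha.1).symm (h b hbT)
    have hTne : Aᶜ.Nonempty := hAc.symm ▸ hMT.mono Set.inter_subset_right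
    apply no_split hGc (hAdef ▸ hMnT) hTne
    intro a ha t ht hadj'
    exact hadj'.2 (hcomp a ha t (hAc ▸ ht))
  · push_neg at hadj
    apply no_split hG hMnT (A := A)
    · exact hAc.symm ▸ (hMT.mono Set.inter_subset_right)
    · intro a ha t ht
      exact hadj a ha t (hAc ▸ ht)

/-- If both `G` and its complement are connected, then every proper
homogeneous set of `G` is included in a quasi-maximal module of `G`. -/
theorem stmt3 {V : Type*} [Fintype V] (G : SimpleGraph V)
    (hG : G.Connected) (hGc : Gᶜ.Connected)
    (S : Set V) (hS : IsProperHomogSet G S) :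
    ∃ M : Set V, IsQuasiMaxModule G M ∧ S ⊆ M := by
  classical
  set cand : Set (Set V) := {M | IsHomogSet G M ∧ S ⊆ M ∧ M ≠ Set.univ} with hcand
  have hScand : S ∈ cand := ⟨hS.1, le_refl _, hS.2.2⟩
  obtain ⟨M, hMc, hMmax⟩ : ∃ M ∈ cand, ∀ N ∈ cand, Set.ncard M ≤ Set.ncard N → Set.ncard M = Set.ncard N := by
    obtain ⟨M, hMc, hMmax⟩ := (Set.toFinite cand).exists_maximalFor Set.ncard cand ⟨S, hScand⟩
    exact ⟨M, hMc, fun N hN h => le_antisymm h (hMmax hN h)⟩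
  obtain ⟨hMhom, hSM, hMne⟩ := hMc
  have hMfin : M.Finite := Set.toFinite M
  have hmax' : ∀ N, IsHomogSet G N → S ⊆ N → N ≠ Set.univ → ¬ M ⊂ N := by
    intro N h1 h2 h3 hlt
    have := hMmax N ⟨h1, h2, h3⟩ (le_of_lt (Set.ncard_lt_ncard hlt (Set.toFinite N)))
    exact absurd this (ne_of_lt (Set.ncard_lt_ncard hlt (Set.toFinite N)))
  have hMnonempty : M.Nonempty := hS.2.1.nonempty.mono hSM
  refine ⟨M, ⟨⟨hMnonempty, hMhom, ?_⟩, hMne, ?_⟩, hSM⟩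
  · -- module property
    intro T hT
    by_cases hTM : (T ∩ M).Nonempty
    · by_cases hTsub : T ⊆ M
      · exact Or.inl hTsub
      · by_cases hMsub : M ⊆ T
        · exact Or.inr (Or.inl hMsub)
        · exfalso
          have hMnT : (M \ T).Nonempty := Set.diff_nonempty.2 hMsub
          have hTnM : (T \ M).Nonempty := Set.diff_nonempty.2 hTsub
          have hUhom : IsHomogSet G (M ∪ T) :=
            homog_union hMhom hT (hTM.mono (by rw [Set.inter_comm]))
          have hUne : M ∪ T ≠ Set.univ := by
            intro hU
            exact key_overlap hG hGc hMhom hT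
              (hTM.mono (by rw [Set.inter_comm])) hMnT hTnM hU
          have : M ⊂ M ∪ T := by
            refine ⟨Set.subset_union_left, fun h => ?_⟩
            obtain ⟨t, htT, htM⟩ := hTnM
            exact htM (h (Or.inr htT))
          exact hmax' (M ∪ T) hUhom (hSM.trans Set.subset_union_left) hUne this
    · exact Or.inr (Or.inr (Set.not_nonempty_iff_eq_empty.1 hTM))
  · -- quasi-maximality
    intro N hN hMN
    by_contra hNne
    exact hmax' N hN.2.1 (hSM.trans hMN.subset) hNne hMN
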